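/- Donsker–Varadhan duality on a finite space: for any function Z : Ω → ℝ on a finite set Ω, any reference distribution μ with full support, and any τ > 0, (1/τ)·log Σ_ω μ(ω)e^{τZ(ω)} = sup_{p ∈ Δ(Ω)} { E_p[Z] − (1/τ)·KL(p‖μ) }, where KL(p‖μ) = Σ_ω p(ω)·log(p(ω)/μ(ω)). Hence the entropic risk measure arises from the KL penalty in the dual representation of convex risk measures. -/

import Mathlib

/-- Donsker–Varadhan duality on a finite space: the entropic risk equals the supremum of
mean minus scaled KL divergence over all distributions. -/
theorem stmt_5 (Ω : Type*) [Fintype Ω] [Nonempty Ω]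
    (μ : Ω → ℝ) (hμpos : ∀ ω, 0 < μ ω) (hμ1 : ∑ ω, μ ω = 1)
    (τ : ℝ) (hτ : 0 < τ) (Z : Ω → ℝ) :
    (1 / τ) * Real.log (∑ ω, μ ω * Real.exp (τ * Z ω)) =
      ⨆ p : stdSimplex ℝ Ω,
        (∑ ω, (p : Ω → ℝ) ω * Z ω
          - (1 / τ) * ∑ ω, (p : Ω → ℝ) ω * Real.log ((p : Ω → ℝ) ω / μ ω)) := by
  classical
  set S := ∑ ω, μ ω * Real.exp (τ * Z ω) with hS
  have hSpos : 0 < S :=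
    Finset.sum_pos (fun ω _ => mul_pos (hμpos ω) (Real.exp_pos _)) Finset.univ_nonempty
  set f : stdSimplex ℝ Ω → ℝ := fun p =>
    ∑ ω, (p : Ω → ℝ) ω * Z ω
      - (1 / τ) * ∑ ω, (p : Ω → ℝ) ω * Real.log ((p : Ω → ℝ) ω / μ ω) with hf
  have hbound : ∀ p : stdSimplex ℝ Ω, f p ≤ (1 / τ) * Real.log S := by
    rintro ⟨p, hp0, hp1⟩
    have key : ∑ ω, p ω * (τ * Z ω - Real.log (p ω / μ ω)) ≤ Real.log S := by
      have h1 : ∑ ω, (p ω * (τ * Z ω - Real.log (p ω / μ ω)) - p ω * Real.log S)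
          ≤ ∑ ω, (μ ω * Real.exp (τ * Z ω) / S - p ω) := by
        apply Finset.sum_le_sum
        intro ω _
        rcases eq_or_lt_of_le (hp0 ω) with h0 | hpos
        · rw [← h0]
          simp only [zero_mul, sub_zero, zero_sub, neg_zero, sub_self]
          exact div_nonneg (mul_pos (hμpos ω) (Real.exp_pos _)).le hSpos.le
        · have hqne : (μ ω * Real.exp (τ * Z ω)) ≠ 0 :=
            (mul_pos (hμpos ω) (Real.exp_pos _)).ne'
          have hSpne : (S * p ω) ≠ 0 := (mul_pos hSpos hpos).ne'
          have heq : τ * Z ω - Real.log (p ω / μ ω) - Real.log S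
              = Real.log (μ ω * Real.exp (τ * Z ω) / (S * p ω)) := by
            rw [Real.log_div hpos.ne' (hμpos ω).ne', Real.log_div hqne hSpne,
              Real.log_mul (hμpos ω).ne' (Real.exp_ne_zero _), Real.log_exp,
              Real.log_mul hSpos.ne' hpos.ne']
            ring
          have hle := Real.log_le_sub_one_of_pos
            (div_pos (mul_pos (hμpos ω) (Real.exp_pos (τ * Z ω))) (mul_pos hSpos hpos))
          calc p ω * (τ * Z ω - Real.log (p ω / μ ω)) - p ω * Real.log S
              = p ω * (τ * Z ω - Real.log (p ω / μ ω) - Real.log S) := by ring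
            _ = p ω * Real.log (μ ω * Real.exp (τ * Z ω) / (S * p ω)) := by rw [heq]
            _ ≤ p ω * (μ ω * Real.exp (τ * Z ω) / (S * p ω) - 1) :=
                mul_le_mul_of_nonneg_left hle (hp0 ω)
            _ = μ ω * Real.exp (τ * Z ω) / S - p ω := by
                field_simp [hpos.ne', hSpos.ne']
      have h2 : ∑ ω, (μ ω * Real.exp (τ * Z ω) / S - p ω) = 0 := by
        rw [Finset.sum_sub_distrib, ← Finset.sum_div, ← hS, div_self hSpos.ne', hp1, sub_self]
      have h3 : ∑ ω, (p ω * (τ * Z ω - Real.log (p ω / μ ω)) - p ω * Real.log S)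
          = ∑ ω, p ω * (τ * Z ω - Real.log (p ω / μ ω)) - Real.log S := by
        rw [Finset.sum_sub_distrib, ← Finset.sum_mul, hp1, one_mul]
      linarith [h1, h2, h3.symm.trans_le (h1.trans h2.le)]
    have hX : ∑ ω, p ω * (τ * Z ω - Real.log (p ω / μ ω))
        = τ * ∑ ω, p ω * Z ω - ∑ ω, p ω * Real.log (p ω / μ ω) := by
      rw [Finset.mul_sum, ← Finset.sum_sub_distrib]
      exact Finset.sum_congr rfl fun ω _ => by ring
    have hfp : f ⟨p, hp0, hp1⟩
        = (1 / τ) * ∑ ω, p ω * (τ * Z ω - Real.log (p ω / μ ω)) := by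
      rw [hf]
      show ∑ ω, p ω * Z ω - 1 / τ * ∑ ω, p ω * Real.log (p ω / μ ω) = _
      rw [hX]
      field_simp
    rw [hfp]
    exact mul_le_mul_of_nonneg_left key (by positivity)
  have hbdd : BddAbove (Set.range f) :=
    ⟨(1 / τ) * Real.log S, by rintro _ ⟨p, rfl⟩; exact hbound p⟩
  -- the Gibbs distribution
  set q : Ω → ℝ := fun ω => μ ω * Real.exp (τ * Z ω) / S with hq
  have hqmem : q ∈ stdSimplex ℝ Ω := by
    constructor
    · intro ω
      exact div_nonneg (mul_pos (hμpos ω) (Real.exp_pos _)).le hSpos.le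
    · rw [hq]
      simp only
      rw [← Finset.sum_div, ← hS, div_self hSpos.ne']
  have hgibbs : f ⟨q, hqmem⟩ = (1 / τ) * Real.log S := by
    have hlog : ∀ ω, Real.log (q ω / μ ω) = τ * Z ω - Real.log S := by
      intro ω
      have : q ω / μ ω = Real.exp (τ * Z ω) / S := by
        rw [hq]
        field_simp [hSpos.ne', (hμpos ω).ne']
      rw [this, Real.log_div (Real.exp_ne_zero _) hSpos.ne', Real.log_exp]
    have hsum : ∑ ω, q ω * Real.log (q ω / μ ω)
        = τ * ∑ ω, q ω * Z ω - Real.log S := by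
      calc ∑ ω, q ω * Real.log (q ω / μ ω)
          = ∑ ω, (τ * (q ω * Z ω) - q ω * Real.log S) := by
            apply Finset.sum_congr rfl
            intro ω _; rw [hlog ω]; ring
        _ = τ * ∑ ω, q ω * Z ω - Real.log S := by
            rw [Finset.sum_sub_distrib, ← Finset.mul_sum, ← Finset.sum_mul,
              hqmem.2, one_mul]
    rw [hf]
    simp only
    show ∑ ω, q ω * Z ω - 1 / τ * ∑ ω, q ω * Real.log (q ω / μ ω) = _
    rw [hsum]
    field_simp
    ring
  haveI : Nonempty (stdSimplex ℝ Ω) := ⟨⟨q, hqmem⟩⟩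
  apply le_antisymm
  · rw [← hgibbs]
    exact le_ciSup hbdd ⟨q, hqmem⟩
  · exact ciSup_le hbound
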